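/- Let r ≥ 3 and let H be a linear r-uniform hypergraph on an n-element vertex set with no isolated vertices, containing no copy of B_4^r, and satisfying r·|E(H)| = (r+1)·n. Then every vertex of H has degree exactly r+1. -/
import Mathlib


/-- A linear r-uniform B_4^r-free hypergraph on n vertices with no isolated
vertices and r·|E(H)| = (r+1)·n is (r+1)-regular. -/
theorem stmt_11 {V : Type*} [Fintype V] [DecidableEq V]
    (r n : ℕ) (hr : 3 ≤ r)
    (hn : Fintype.card V = n)
    (E : Finset (Finset V))
    (huniform : ∀ e ∈ E, e.card = r)
    (hlinear : ∀ e ∈ E, ∀ f ∈ E, e ≠ f → (e ∩ f).card ≤ 1)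
    (hnoiso : ∀ v : V, 1 ≤ (E.filter (fun e => v ∈ e)).card)
    (hB4free : ¬ ∃ e₁ ∈ E, ∃ e₂ ∈ E, ∃ e₃ ∈ E, ∃ f ∈ E, ∃ v : V,
      e₁ ≠ e₂ ∧ e₁ ≠ e₃ ∧ e₁ ≠ f ∧ e₂ ≠ e₃ ∧ e₂ ≠ f ∧ e₃ ≠ f ∧
      v ∈ e₁ ∧ v ∈ e₂ ∧ v ∈ e₃ ∧ v ∉ f ∧
      (f ∩ e₁).Nonempty ∧ f ∩ e₂ = ∅ ∧ f ∩ e₃ = ∅)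
    (hcount : r * E.card = (r + 1) * n) :
    ∀ v : V, (E.filter (fun e => v ∈ e)).card = r + 1 := by
  classical
  set d : V → ℕ := fun v => (E.filter (fun e => v ∈ e)).card with hd
  have keyA : ∀ v : V, r + 2 ≤ d v → ∀ f ∈ E, v ∉ f → ∀ e1 ∈ E, v ∈ e1 →
      (f ∩ e1).Nonempty → False := by
    intro v hv f hf hvf e1 he1 hve1 hne
    set Ev := E.filter (fun e => v ∈ e) with hEv
    set S := Ev.filter (fun e => (f ∩ e).Nonempty) with hSdef
    have hScard : S.card ≤ r := by
      have hinj : S.card ≤ f.card := by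
        apply Finset.card_le_card_of_injOn
          (fun e => if h : (f ∩ e).Nonempty then h.choose else v)
        · intro e he
          have hne' : (f ∩ e).Nonempty := (Finset.mem_filter.mp he).2
          simp only [dif_pos hne']
          exact (Finset.mem_inter.mp hne'.choose_spec).1
        · intro a ha b hb hab
          by_contra hne''
          have hna : (f ∩ a).Nonempty := (Finset.mem_filter.mp ha).2
          have hnb : (f ∩ b).Nonempty := (Finset.mem_filter.mp hb).2
          simp only [dif_pos hna, dif_pos hnb] at hab
          have hua := hna.choose_spec
          have hub := hnb.choose_spec
          rw [hab] at hua
          have hu_a : hnb.choose ∈ a := (Finset.mem_inter.mp hua).2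
          have hu_b : hnb.choose ∈ b := (Finset.mem_inter.mp hub).2
          have hu_f : hnb.choose ∈ f := (Finset.mem_inter.mp hub).1
          have haE : a ∈ E := (Finset.mem_filter.mp ((Finset.mem_filter.mp ha).1)).1
          have hbE : b ∈ E := (Finset.mem_filter.mp ((Finset.mem_filter.mp hb).1)).1
          have hva : v ∈ a := (Finset.mem_filter.mp ((Finset.mem_filter.mp ha).1)).2
          have hvb : v ∈ b := (Finset.mem_filter.mp ((Finset.mem_filter.mp hb).1)).2
          have huv : hnb.choose ≠ v := fun h => hvf (h ▸ hu_f)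
          have h2 : ({v, hnb.choose} : Finset V) ⊆ a ∩ b := by
            intro x hx
            rcases Finset.mem_insert.mp hx with rfl | hx
            · exact Finset.mem_inter.mpr ⟨hva, hvb⟩
            · rw [Finset.mem_singleton.mp hx]
              exact Finset.mem_inter.mpr ⟨hu_a, hu_b⟩
          have hcard2 : 2 ≤ (a ∩ b).card := by
            have := Finset.card_le_card h2
            rwa [Finset.card_pair (Ne.symm huv)] at this
          have := hlinear a haE b hbE hne''
          omega
      rwa [huniform f hf] at hinj
    have hsub : S ⊆ Ev := Finset.filter_subset _ _
    have hT : 2 ≤ (Ev \ S).card := by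
      have h1 := Finset.card_sdiff_of_subset hsub
      have h2 := Finset.card_le_card hsub
      have hEvcard : r + 2 ≤ Ev.card := hv
      omega
    obtain ⟨e2, he2, e3, he3, hne23⟩ := Finset.one_lt_card.mp (by omega : 1 < (Ev \ S).card)
    have hprop : ∀ e ∈ Ev \ S, e ∈ E ∧ v ∈ e ∧ f ∩ e = ∅ := by
      intro e he
      obtain ⟨heEv, heS⟩ := Finset.mem_sdiff.mp he
      obtain ⟨heE, hve⟩ := Finset.mem_filter.mp heEv
      refine ⟨heE, hve, ?_⟩
      rw [← Finset.not_nonempty_iff_eq_empty]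
      intro hne'
      exact heS (Finset.mem_filter.mpr ⟨heEv, hne'⟩)
    obtain ⟨he2E, hve2, hfe2⟩ := hprop e2 he2
    obtain ⟨he3E, hve3, hfe3⟩ := hprop e3 he3
    have he1S : e1 ∈ S := Finset.mem_filter.mpr ⟨Finset.mem_filter.mpr ⟨he1, hve1⟩, hne⟩
    apply hB4free
    refine ⟨e1, he1, e2, he2E, e3, he3E, f, hf, v, ?_, ?_, ?_, hne23, ?_, ?_,
      hve1, hve2, hve3, hvf, hne, hfe2, hfe3⟩
    · rintro rfl; exact (Finset.mem_sdiff.mp he2).2 he1S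
    · rintro rfl; exact (Finset.mem_sdiff.mp he3).2 he1S
    · rintro rfl; exact hvf hve1
    · rintro rfl; exact hvf hve2
    · rintro rfl; exact hvf hve3
  have keyB : ∀ e ∈ E, ∀ c, c ∈ e → r + 2 ≤ d c → ∀ w ∈ e, w ≠ c → d w = 1 := by
    intro e heE c hce hc w hwe hwc
    have huniq : ∀ g ∈ E, w ∈ g → g = e := by
      intro g hgE hwg
      by_contra hge
      by_cases hcg : c ∈ g
      · have h2 : ({c, w} : Finset V) ⊆ g ∩ e := by
          intro x hx
          rcases Finset.mem_insert.mp hx with rfl | hx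
          · exact Finset.mem_inter.mpr ⟨hcg, hce⟩
          · rw [Finset.mem_singleton.mp hx]; exact Finset.mem_inter.mpr ⟨hwg, hwe⟩
        have hle := Finset.card_le_card h2
        rw [Finset.card_pair (Ne.symm hwc)] at hle
        have := hlinear g hgE e heE hge
        omega
      · exact keyA c hc g hgE hcg e heE hce ⟨w, Finset.mem_inter.mpr ⟨hwg, hwe⟩⟩
    have hsingle : E.filter (fun g => w ∈ g) = {e} := by
      apply Finset.eq_singleton_iff_unique_mem.mpr
      refine ⟨Finset.mem_filter.mpr ⟨heE, hwe⟩, ?_⟩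
      intro g hg
      obtain ⟨hgE, hwg⟩ := Finset.mem_filter.mp hg
      exact huniq g hgE hwg
    show (E.filter (fun e => w ∈ e)).card = 1
    rw [hsingle, Finset.card_singleton]
  have hdpos : ∀ w : V, 0 < d w := fun w => hnoiso w
  have hdne : ∀ w : V, ((d w : ℚ)) ≠ 0 := by
    intro w
    have := hdpos w
    positivity
  -- double counting
  have swap : ∑ e ∈ E, ∑ w ∈ e, (1 : ℚ) / d w = ∑ w : V, (d w : ℚ) * (1 / d w) := by
    calc ∑ e ∈ E, ∑ w ∈ e, (1:ℚ) / d w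
        = ∑ e ∈ E, ∑ w : V, (if w ∈ e then (1:ℚ) / d w else 0) := by
          apply Finset.sum_congr rfl
          intro e _
          rw [Finset.sum_ite_mem, Finset.univ_inter]
      _ = ∑ w : V, ∑ e ∈ E, (if w ∈ e then (1:ℚ) / d w else 0) := Finset.sum_comm
      _ = ∑ w : V, (d w : ℚ) * (1 / d w) := by
          apply Finset.sum_congr rfl
          intro w _
          rw [← Finset.sum_filter, Finset.sum_const, nsmul_eq_mul]
  have hsum_n : ∑ e ∈ E, ∑ w ∈ e, (1:ℚ) / d w = n := by
    rw [swap]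
    have h1 : ∀ w : V, (d w : ℚ) * (1 / d w) = 1 := by
      intro w
      rw [mul_one_div, div_self (hdne w)]
    rw [Finset.sum_congr rfl (fun w _ => h1 w), Finset.sum_const, Finset.card_univ, hn,
      nsmul_eq_mul, mul_one]
  have hr1 : (0:ℚ) < (r:ℚ) + 1 := by positivity
  have hbound : ∀ e ∈ E, (r : ℚ) / (r + 1) ≤ ∑ w ∈ e, (1:ℚ) / d w := by
    intro e heE
    by_cases hcase : ∃ c ∈ e, r + 2 ≤ d c
    · obtain ⟨c, hce, hc⟩ := hcase
      have h1 : ∀ w ∈ e.erase c, (1:ℚ) / d w = 1 := by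
        intro w hw
        rw [keyB e heE c hce hc w (Finset.mem_of_mem_erase hw) (Finset.ne_of_mem_erase hw)]
        norm_num
      have hsplit : ∑ w ∈ e, (1:ℚ)/d w = 1 / d c + ∑ w ∈ e.erase c, (1:ℚ)/d w :=
        (Finset.add_sum_erase e _ hce).symm
      rw [hsplit, Finset.sum_congr rfl h1, Finset.sum_const, Finset.card_erase_of_mem hce,
        huniform e heE, nsmul_eq_mul, mul_one]
      have h2 : (0:ℚ) ≤ 1 / d c := by positivity
      have h3 : (r:ℚ)/(r+1) ≤ 1 := by
        rw [div_le_one hr1]; linarith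
      have h4 : (2:ℚ) ≤ ((r-1 : ℕ) : ℚ) := by
        have : 2 ≤ r - 1 := by omega
        exact_mod_cast this
      linarith
    · push_neg at hcase
      have h1 : ∀ w ∈ e, (1:ℚ)/(r+1) ≤ 1 / d w := by
        intro w hw
        apply one_div_le_one_div_of_le
        · exact_mod_cast hdpos w
        · have := hcase w hw
          have : d w ≤ r + 1 := by omega
          exact_mod_cast this
      calc (r:ℚ)/(r+1) = e.card • ((1:ℚ)/(r+1)) := by
            rw [huniform e heE, nsmul_eq_mul, mul_one_div]
        _ ≤ ∑ w ∈ e, (1:ℚ) / d w := Finset.card_nsmul_le_sum e _ _ h1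
  have htot : ∑ _e ∈ E, ((r:ℚ)/(r+1)) = (n:ℚ) := by
    rw [Finset.sum_const, nsmul_eq_mul]
    have hc : (r:ℚ) * (E.card:ℚ) = ((r:ℚ)+1) * n := by exact_mod_cast hcount
    rw [mul_div_assoc']
    rw [div_eq_iff (ne_of_gt hr1)]
    linarith [hc]
  have heq : ∀ e ∈ E, ∑ w ∈ e, (1:ℚ)/d w = (r:ℚ)/(r+1) := by
    have h := (Finset.sum_eq_sum_iff_of_le hbound).mp (by rw [htot, hsum_n])
    intro e he
    exact (h e he).symm
  have hdeg : ∀ e ∈ E, ∀ w ∈ e, d w = r + 1 := by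
    intro e heE
    have hno : ∀ c ∈ e, d c ≤ r + 1 := by
      intro c hce
      by_contra hcc
      push_neg at hcc
      have hc : r + 2 ≤ d c := hcc
      have h1 : ∀ w ∈ e.erase c, (1:ℚ) / d w = 1 := by
        intro w hw
        rw [keyB e heE c hce hc w (Finset.mem_of_mem_erase hw) (Finset.ne_of_mem_erase hw)]
        norm_num
      have hsplit : ∑ w ∈ e, (1:ℚ)/d w = 1 / d c + ∑ w ∈ e.erase c, (1:ℚ)/d w :=
        (Finset.add_sum_erase e _ hce).symm
      have he2 := heq e heE
      rw [hsplit, Finset.sum_congr rfl h1, Finset.sum_const, Finset.card_erase_of_mem hce,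
        huniform e heE, nsmul_eq_mul, mul_one] at he2
      have h2 : (0:ℚ) ≤ 1 / d c := by positivity
      have h3 : (r:ℚ)/(r+1) ≤ 1 := by
        rw [div_le_one hr1]; linarith
      have h4 : (2:ℚ) ≤ ((r-1 : ℕ) : ℚ) := by
        have : 2 ≤ r - 1 := by omega
        exact_mod_cast this
      linarith
    have h1 : ∀ w ∈ e, (1:ℚ)/(r+1) ≤ 1 / d w := by
      intro w hw
      apply one_div_le_one_div_of_le
      · exact_mod_cast hdpos w
      · exact_mod_cast hno w hw
    have h2 : ∑ _w ∈ e, ((1:ℚ)/(r+1)) = ∑ w ∈ e, (1:ℚ)/d w := by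
      rw [heq e heE, Finset.sum_const, huniform e heE, nsmul_eq_mul, mul_one_div]
    have h3 := (Finset.sum_eq_sum_iff_of_le h1).mp h2
    intro w hw
    have h4 := h3 w hw
    have h5 : ((d w : ℚ)) = (r:ℚ) + 1 := by
      have hdw := hdne w
      field_simp at h4
      linarith
    exact_mod_cast h5
  intro v
  obtain ⟨e, he⟩ := Finset.card_pos.mp (hdpos v)
  obtain ⟨heE, hve⟩ := Finset.mem_filter.mp he
  exact hdeg e heE v hve
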